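/- Let (T, η, μ) be a monad on a category C and let (L, l) be a localization on C. If there is a localization L' on the Eilenberg–Moore category C^T such that L ∘ U is naturally isomorphic to U ∘ L' (U the forgetful functor), then U preserves and reflects local objects and preserves and reflects equivalences (with respect to L' and L), and T preserves L-equivalences. -/

import Mathlib

open CategoryTheory

/-- A localization (reflection) on a category `C`: a functor `L : C ⥤ C` with a natural
transformation `l : 𝟭 C ⟶ L` such that `L (l X) = l (L X)` and these morphisms are
isomorphisms. -/
structure LocalizationData (C : Type*) [Category C] where
  /-- the localization functor -/
  L : C ⥤ C
  /-- the unit -/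
  l : 𝟭 C ⟶ L
  coincide : ∀ X : C, L.map (l.app X) = l.app (L.obj X)
  isIso : ∀ X : C, IsIso (L.map (l.app X))

/-- An object `X` is `L`-local if `l X : X ⟶ L X` is an isomorphism. -/
def LocalizationData.IsLocal {C : Type*} [Category C] (Λ : LocalizationData C) (X : C) : Prop :=
  IsIso (Λ.l.app X)

/-- A morphism `g` is an `L`-equivalence if `L g` is an isomorphism. -/
def LocalizationData.IsEquiv {C : Type*} [Category C] (Λ : LocalizationData C)
    {X Y : C} (g : X ⟶ Y) : Prop :=
  IsIso (Λ.L.map g)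

namespace LocalizationData

variable {C : Type*} [Category C] (Λ : LocalizationData C)

lemma isLocal_L (X : C) : Λ.IsLocal (Λ.L.obj X) := by
  unfold IsLocal
  rw [← Λ.coincide X]
  exact Λ.isIso X

lemma isLocal_of_iso {X Y : C} (f : X ≅ Λ.L.obj Y) : Λ.IsLocal X := by
  have h := Λ.l.naturality f.hom
  simp only [Functor.id_map] at h
  have hLY : IsIso (Λ.l.app (Λ.L.obj Y)) := Λ.isLocal_L Y
  have : Λ.l.app X = f.hom ≫ Λ.l.app (Λ.L.obj Y) ≫ inv (Λ.L.map f.hom) := by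
    rw [← Category.assoc, h, Category.assoc, IsIso.hom_inv_id, Category.comp_id]
  unfold IsLocal
  rw [this]
  infer_instance

lemma isIso_of_equiv {X Y : C} (g : X ⟶ Y) (hX : Λ.IsLocal X) (hY : Λ.IsLocal Y)
    (hg : Λ.IsEquiv g) : IsIso g := by
  haveI : IsIso (Λ.l.app X) := hX
  haveI : IsIso (Λ.l.app Y) := hY
  haveI : IsIso (Λ.L.map g) := hg
  have h := Λ.l.naturality g
  simp only [Functor.id_map] at h
  have : g = Λ.l.app X ≫ Λ.L.map g ≫ inv (Λ.l.app Y) := by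
    rw [← Category.assoc, ← h, Category.assoc, IsIso.hom_inv_id, Category.comp_id]
  rw [this]
  infer_instance

lemma bijective_precomp {X Y Z : C} (g : X ⟶ Y) (hg : Λ.IsEquiv g) (hZ : Λ.IsLocal Z) :
    Function.Bijective (fun f : Y ⟶ Z => g ≫ f) := by
  haveI : IsIso (Λ.L.map g) := hg
  haveI : IsIso (Λ.l.app Z) := hZ
  constructor
  · intro f1 f2 h
    simp only at h
    have hL : Λ.L.map g ≫ Λ.L.map f1 = Λ.L.map g ≫ Λ.L.map f2 := by
      rw [← Λ.L.map_comp, ← Λ.L.map_comp, h]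
    have hL' : Λ.L.map f1 = Λ.L.map f2 := by
      rwa [cancel_epi] at hL
    have h1 := Λ.l.naturality f1
    have h2 := Λ.l.naturality f2
    simp only [Functor.id_map] at h1 h2
    have : f1 ≫ Λ.l.app Z = f2 ≫ Λ.l.app Z := by rw [h1, h2, hL']
    rwa [cancel_mono] at this
  · intro f
    refine ⟨Λ.l.app Y ≫ inv (Λ.L.map g) ≫ Λ.L.map f ≫ inv (Λ.l.app Z), ?_⟩
    have hg' := Λ.l.naturality g
    have hf := Λ.l.naturality f
    simp only [Functor.id_map] at hg' hf
    simp only []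
    rw [← Category.assoc, hg', Category.assoc, IsIso.hom_inv_id_assoc,
      ← Category.assoc, ← hf, Category.assoc, IsIso.hom_inv_id, Category.comp_id]

lemma isEquiv_of_bijective {X Y : C} (g : X ⟶ Y)
    (h : ∀ Z : C, Λ.IsLocal Z → Function.Bijective (fun f : Y ⟶ Z => g ≫ f)) :
    Λ.IsEquiv g := by
  haveI hX := Λ.isIso X
  haveI hY := Λ.isIso Y
  obtain ⟨k, hk⟩ := (h (Λ.L.obj X) (Λ.isLocal_L X)).2 (Λ.l.app X)
  simp only at hk
  -- r is a two-sided inverse of L.map g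
  set r : Λ.L.obj Y ⟶ Λ.L.obj X := Λ.L.map k ≫ inv (Λ.L.map (Λ.l.app X)) with hr
  have h1 : Λ.L.map g ≫ r = 𝟙 _ := by
    rw [hr, ← Category.assoc, ← Λ.L.map_comp, hk, IsIso.hom_inv_id]
  -- k ≫ L.map g = l.app Y
  have hk2 : k ≫ Λ.L.map g = Λ.l.app Y := by
    apply (h (Λ.L.obj Y) (Λ.isLocal_L Y)).1
    simp only []
    have hg' := Λ.l.naturality g
    simp only [Functor.id_map] at hg'
    rw [← Category.assoc, hk, hg']
  have h2 : r ≫ Λ.L.map g = 𝟙 _ := by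
    -- use naturality of l at L.map g
    have hn := Λ.l.naturality (Λ.L.map g)
    simp only [Functor.id_map] at hn
    -- L.map (L.map g) = inv (L.map (l.app X)) ≫ L.map g ≫ L.map (l.app Y)
    rw [← Λ.coincide X, ← Λ.coincide Y] at hn
    have hLL : Λ.L.map (Λ.L.map g) = inv (Λ.L.map (Λ.l.app X)) ≫ Λ.L.map g ≫
        Λ.L.map (Λ.l.app Y) := by
      rw [IsIso.eq_inv_comp]
      exact hn.symm
    have key : Λ.L.map k ≫ Λ.L.map (Λ.L.map g) = Λ.L.map (Λ.l.app Y) := by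
      rw [← Λ.L.map_comp, hk2]
    rw [hLL] at key
    have h3 : (r ≫ Λ.L.map g) ≫ Λ.L.map (Λ.l.app Y)
        = 𝟙 _ ≫ Λ.L.map (Λ.l.app Y) := by
      rw [Category.id_comp, hr]
      simpa [Category.assoc] using key
    rwa [cancel_mono] at h3
  exact ⟨⟨r, h1, h2⟩⟩

end LocalizationData

/-- If a localization `L'` on the Eilenberg–Moore category `C^T` satisfies
`L ∘ U ≅ U ∘ L'`, then the forgetful functor preserves and reflects local objects and
equivalences, and `T` preserves `L`-equivalences. -/
theorem forget_preserves_reflects_of_localization_iso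
    {C : Type*} [Category C] (T : Monad C) (Λ : LocalizationData C)
    (Λ' : LocalizationData (Monad.Algebra T))
    (e : T.forget ⋙ Λ.L ≅ Λ'.L ⋙ T.forget) :
    (∀ A : Monad.Algebra T, Λ'.IsLocal A ↔ Λ.IsLocal (T.forget.obj A)) ∧
    (∀ ⦃A B : Monad.Algebra T⦄ (g : A ⟶ B),
      Λ'.IsEquiv g ↔ Λ.IsEquiv (T.forget.map g)) ∧
    (∀ ⦃X Y : C⦄ (g : X ⟶ Y), Λ.IsEquiv g → Λ.IsEquiv (T.map g)) := by
  -- key conjugation identity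
  have conj : ∀ ⦃A B : Monad.Algebra T⦄ (g : A ⟶ B),
      Λ.L.map (T.forget.map g)
        = e.hom.app A ≫ T.forget.map (Λ'.L.map g) ≫ e.inv.app B := by
    intro A B g
    have h := e.hom.naturality g
    simp only [Functor.comp_map] at h
    rw [← Category.assoc, ← h, Category.assoc]
    simp
  -- part 2
  have part2 : ∀ ⦃A B : Monad.Algebra T⦄ (g : A ⟶ B),
      Λ'.IsEquiv g ↔ Λ.IsEquiv (T.forget.map g) := by
    intro A B g
    constructor
    · intro hg
      haveI : IsIso (Λ'.L.map g) := hg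
      unfold LocalizationData.IsEquiv
      rw [conj g]
      infer_instance
    · intro hg
      haveI : IsIso (Λ.L.map (T.forget.map g)) := hg
      have : T.forget.map (Λ'.L.map g)
          = e.inv.app A ≫ Λ.L.map (T.forget.map g) ≫ e.hom.app B := by
        rw [conj g]
        simp
        erw [Category.assoc, e.inv_hom_id_app B, Category.comp_id]
      haveI : IsIso (T.forget.map (Λ'.L.map g)) := by rw [this]; infer_instance
      exact isIso_of_reflects_iso (Λ'.L.map g) T.forget
  -- part 1
  have part1 : ∀ A : Monad.Algebra T, Λ'.IsLocal A ↔ Λ.IsLocal (T.forget.obj A) := by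
    intro A
    constructor
    · intro hA
      haveI : IsIso (Λ'.l.app A) := hA
      exact Λ.isLocal_of_iso
        (asIso (T.forget.map (Λ'.l.app A)) ≪≫ (e.app A).symm)
    · intro hA
      -- forget.map (l'.app A) is an L-equivalence between local objects, hence iso
      have hequiv : Λ.IsEquiv (T.forget.map (Λ'.l.app A)) :=
        (part2 (Λ'.l.app A)).1 (Λ'.isIso A)
      have hloc2 : Λ.IsLocal (T.forget.obj (Λ'.L.obj A)) :=
        Λ.isLocal_of_iso (e.app A).symm
      haveI : IsIso (T.forget.map (Λ'.l.app A)) :=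
        Λ.isIso_of_equiv _ hA hloc2 hequiv
      exact isIso_of_reflects_iso (Λ'.l.app A) T.forget
  refine ⟨part1, part2, ?_⟩
  -- part 3
  intro X Y g hg
  have hfree : Λ'.IsEquiv (T.free.map g) := by
    apply Λ'.isEquiv_of_bijective
    intro B hB
    have hUB : Λ.IsLocal (T.forget.obj B) := (part1 B).1 hB
    have hbij := Λ.bijective_precomp g hg hUB
    have : (fun k : T.free.obj Y ⟶ B => T.free.map g ≫ k)
        = (T.adj.homEquiv X B).symm ∘ (fun f : Y ⟶ T.forget.obj B => g ≫ f)
          ∘ (T.adj.homEquiv Y B) := by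
      funext k
      rw [Function.comp_apply, Function.comp_apply, Equiv.eq_symm_apply]
      exact T.adj.homEquiv_naturality_left g k
    rw [this]
    exact ((T.adj.homEquiv X B).symm.bijective.comp hbij).comp
      (T.adj.homEquiv Y B).bijective
  exact (part2 (T.free.map g)).1 hfree
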